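/- Let S be a finite type, (S, step, s₀) a transition system, and F ⊆ S. If there is a finite run ρ : Fin (m+1) → S from s₀ such that the cardinality of the set {i : Fin (m+1) | ρ i ∈ F} is at least Fintype.card S + 1, then there exists an infinite run π from s₀ such that the set {n : ℕ | π n ∈ F} is infinite. -/

import Mathlib

/-- A finite run of length `m` of a transition system from the initial state `s₀`. -/
def TSFinRun {S : Type*} (step : S → S → Prop) (s₀ : S) (m : ℕ)
    (ρ : Fin (m + 1) → S) : Prop :=
  ρ 0 = s₀ ∧ ∀ i : Fin m, step (ρ i.castSucc) (ρ i.succ)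

/-- An infinite run of a transition system from the initial state `s₀`. -/
def TSInfRun {S : Type*} (step : S → S → Prop) (s₀ : S) (π : ℕ → S) : Prop :=
  π 0 = s₀ ∧ ∀ n : ℕ, step (π n) (π (n + 1))

/-- Lasso construction. -/
lemma lasso_aux {S : Type*} (step : S → S → Prop) (s₀ : S) (F : Set S) {m : ℕ}
    (ρ : Fin (m + 1) → S) (h0 : ρ 0 = s₀)
    (hstep' : ∀ (x : ℕ) (hx : x < m), step (ρ ⟨x, by omega⟩) (ρ ⟨x + 1, by omega⟩))
    (a b : ℕ) (hab : a < b) (hbm : b ≤ m)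
    (heq : ρ ⟨a, by omega⟩ = ρ ⟨b, by omega⟩) (hF : ρ ⟨a, by omega⟩ ∈ F) :
    ∃ π : ℕ → S, TSInfRun step s₀ π ∧ {n : ℕ | π n ∈ F}.Infinite := by
  set p := b - a with hp
  have hp0 : 0 < p := by omega
  have hmod : ∀ n : ℕ, a + (n - a) % p < m + 1 := fun n => by
    have := Nat.mod_lt (n - a) hp0; omega
  set g : ℕ → Fin (m + 1) := fun n => if h : n < a then ⟨n, by omega⟩
    else ⟨a + (n - a) % p, hmod n⟩ with hg
  have gval : ∀ n : ℕ, (g n).val = if n < a then n else a + (n - a) % p := by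
    intro n
    simp only [hg]
    split <;> simp_all
  refine ⟨fun n => ρ (g n), ⟨?_, ?_⟩, ?_⟩
  · -- initial state
    show ρ (g 0) = s₀
    have : g 0 = (0 : Fin (m + 1)) := by
      apply Fin.ext
      rw [gval]
      split <;> simp <;> omega
    rw [this, h0]
  · -- step property
    intro n
    show step (ρ (g n)) (ρ (g (n + 1)))
    by_cases h1 : n + 1 ≤ a
    · have e1 : g n = ⟨n, by omega⟩ := by apply Fin.ext; rw [gval]; simp; omega
      have e2 : g (n + 1) = ⟨n + 1, by omega⟩ := by
        apply Fin.ext; rw [gval]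
        split
        · rfl
        · have h2 : n + 1 = a := by omega
          simp [h2]
      rw [e1, e2]; exact hstep' n (by omega)
    · -- n ≥ a
      have hna : a ≤ n := by omega
      set r := (n - a) % p with hr
      have hrp : r < p := Nat.mod_lt _ hp0
      have e1 : g n = ⟨a + r, hmod n⟩ := by
        apply Fin.ext; rw [gval]; simp only [← hr]; split <;> omega
      have hsucc : n + 1 - a = (n - a) + 1 := by omega
      by_cases h2 : r + 1 < p
      · have e2 : g (n + 1) = ⟨a + (r + 1), by omega⟩ := by
          apply Fin.ext
          show (g (n + 1)).val = a + (r + 1)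
          rw [gval, if_neg (by omega), hsucc, Nat.add_mod, ← hr,
            Nat.mod_eq_of_lt (show (1:ℕ) < p by omega), Nat.mod_eq_of_lt h2]
        rw [e1, e2]
        exact hstep' (a + r) (by omega)
      · -- wrap around
        have hr1 : r + 1 = p := by omega
        have hz : (n - a + 1) % p = 0 := by
          rw [Nat.add_mod, ← hr]
          rcases eq_or_lt_of_le (show 1 ≤ p from hp0) with hp1 | hp1
          · have hp1' : p = 1 := hp1.symm
            simp [hp1', Nat.mod_one]
          · rw [Nat.mod_eq_of_lt hp1, hr1, Nat.mod_self]
        have e2 : g (n + 1) = ⟨a, by omega⟩ := by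
          apply Fin.ext
          show (g (n + 1)).val = a
          rw [gval, if_neg (by omega), hsucc, hz]
          omega
        rw [e1, e2, heq]
        convert hstep' (a + r) (by omega) using 2
        apply Fin.ext
        show b = a + r + 1
        omega
  · -- infinitely many visits
    apply Set.infinite_of_injective_forall_mem
      (f := fun k : ℕ => a + k * p)
    · intro k₁ k₂ h
      simp only at h
      have : k₁ * p = k₂ * p := by omega
      exact Nat.eq_of_mul_eq_mul_right hp0 this
    · intro k
      simp only [Set.mem_setOf_eq]
      have : g (a + k * p) = ⟨a, by omega⟩ := by
        apply Fin.ext; rw [gval]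
        rw [if_neg (by omega)]
        simp [Nat.mul_mod_left]
      rw [this]
      exact hF

/-- Pigeonhole plus lasso: if a finite run of a finite-state transition system visits
the set `F` at least `Fintype.card S + 1` times, then there is an infinite run from
the initial state visiting `F` infinitely often. -/
theorem exists_infRun_infinite_visits_of_many_visits {S : Type*} [Fintype S]
    (step : S → S → Prop) (s₀ : S) (F : Set S) {m : ℕ} (ρ : Fin (m + 1) → S)
    (hρ : TSFinRun step s₀ m ρ)
    (hcard : Fintype.card S + 1 ≤ {i : Fin (m + 1) | ρ i ∈ F}.ncard) :
    ∃ π : ℕ → S, TSInfRun step s₀ π ∧ {n : ℕ | π n ∈ F}.Infinite := by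
  classical
  obtain ⟨h0, hstep⟩ := hρ
  have hstep' : ∀ (x : ℕ) (hx : x < m),
      step (ρ ⟨x, by omega⟩) (ρ ⟨x + 1, by omega⟩) := fun x hx => hstep ⟨x, hx⟩
  rw [Set.ncard_eq_toFinset_card'] at hcard
  have hmaps : ∀ x ∈ ({i : Fin (m + 1) | ρ i ∈ F}).toFinset, ρ x ∈ (Finset.univ : Finset S) :=
    fun x _ => Finset.mem_univ _
  obtain ⟨i, hi, j, hj, hij, hρij⟩ :=
    Finset.exists_ne_map_eq_of_card_lt_of_maps_to (by simpa using hcard) hmaps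
  simp only [Set.mem_toFinset, Set.mem_setOf_eq] at hi hj
  rcases lt_or_gt_of_ne hij with hlt | hlt
  · exact lasso_aux step s₀ F ρ h0 hstep' i j hlt (by omega)
      (by simpa [Fin.eta] using hρij) (by simpa [Fin.eta] using hi)
  · exact lasso_aux step s₀ F ρ h0 hstep' j i hlt (by omega)
      (by simpa [Fin.eta] using hρij.symm) (by simpa [Fin.eta] using hj)
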